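/- Let V = {Σ_k m_k (f_k ⊗ ḡ_k) : m ∈ ℂᴷ} be the span of rank-one operators built from finite families (g_k) in ℂⁿ and (f_k) in ℂᵐ. The best Frobenius-norm approximation of an m × n matrix T by a frame multiplier M_{m,f,g} = Σ_k m_k f_k ⊗ ḡ_k is P_V(T) = Σ_k σ_k (f_k ⊗ ḡ_k), where σ = G† · σ_L, G is the Gram matrix G_{l,k} = ⟨f_k⊗ḡ_k, f_l⊗ḡ_l⟩_HS = ⟨g_l, g_k⟩⟨f_k, f_l⟩ and σ_L(T)_k = ⟨T g_k, f_k⟩; i.e., ‖T − P_V(T)‖_HS ≤ ‖T − M‖_HS for every operator M in V. -/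

import Mathlib

open scoped ComplexConjugate BigOperators
open Matrix

private lemma sum_rot {α β γ : Type*} {M : Type*} [Fintype α] [Fintype β] [Fintype γ]
    [AddCommMonoid M] (f : α → β → γ → M) :
    ∑ i, ∑ j, ∑ k, f i j k = ∑ k, ∑ i, ∑ j, f i j k := by
  calc ∑ i, ∑ j, ∑ k, f i j k = ∑ i, ∑ k, ∑ j, f i j k :=
        Finset.sum_congr rfl fun i _ => Finset.sum_comm
    _ = ∑ k, ∑ i, ∑ j, f i j k := Finset.sum_comm

/-- best Frobenius-norm approximation of a matrix `T` by frame multipliers.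
With rank-one matrices `R k = f k ⊗ (g k)‾`, Gram matrix `G_{l,k} = ⟨R k, R l⟩_HS`,
lower symbol `σ_L(T)_k = ⟨T, R k⟩_HS = ⟨T g_k, f_k⟩`, and upper symbol `σ = G† σ_L`
(`G†` the Moore–Penrose pseudoinverse of `G`), the operator `P_V(T) = Σ_k σ_k R_k`
is the best approximation of `T` in Frobenius norm among all multipliers `Σ_k m_k R_k`. -/
theorem best_multiplier_approximation (m n K : ℕ)
    (g : Fin K → (Fin n → ℂ)) (f : Fin K → (Fin m → ℂ))
    (T : Matrix (Fin m) (Fin n) ℂ)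
    (R : Fin K → Matrix (Fin m) (Fin n) ℂ)
    (hR : ∀ k, R k = Matrix.of fun i j => f k i * conj (g k j))
    (G : Matrix (Fin K) (Fin K) ℂ)
    (hGram : ∀ l k, G l k = Matrix.trace ((R l)ᴴ * R k))
    -- `Gdag` is the Moore–Penrose pseudoinverse of `G`
    (Gdag : Matrix (Fin K) (Fin K) ℂ)
    (h1 : G * Gdag * G = G) (h2 : Gdag * G * Gdag = Gdag)
    (h3 : (G * Gdag)ᴴ = G * Gdag) (h4 : (Gdag * G)ᴴ = Gdag * G)
    (σL : Fin K → ℂ) (hσL : ∀ k, σL k = Matrix.trace ((R k)ᴴ * T))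
    (σ : Fin K → ℂ) (hσ : σ = Gdag.mulVec σL) :
    ∀ mcoef : Fin K → ℂ,
      ∑ i, ∑ j, ‖(T - ∑ k, σ k • R k) i j‖ ^ 2 ≤
        ∑ i, ∑ j, ‖(T - ∑ k, mcoef k • R k) i j‖ ^ 2 := by
  intro mcoef
  classical
  -- trace formula for the Frobenius inner product
  have htr : ∀ A B : Matrix (Fin m) (Fin n) ℂ,
      Matrix.trace (Aᴴ * B) = ∑ i, ∑ j, conj (A i j) * B i j := by
    intro A B
    simp only [Matrix.trace, Matrix.diag_apply, Matrix.mul_apply, Matrix.conjTranspose_apply,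
      starRingEnd_apply]
    exact Finset.sum_comm
  have hG : ∀ l k, G l k = ∑ i, ∑ j, conj (R l i j) * R k i j := fun l k => by
    rw [hGram, htr]
  have hσL' : ∀ k, σL k = ∑ i, ∑ j, conj (R k i j) * T i j := fun k => by
    rw [hσL, htr]
  have hmv : ∀ (A : Matrix (Fin K) (Fin K) ℂ) (v : Fin K → ℂ) (l : Fin K),
      A.mulVec v l = ∑ k, A l k * v k := by
    intro A v l
    simp [Matrix.mulVec, dotProduct]
  -- key inner-product identity
  have key : ∀ (c : Fin K → ℂ) (l : Fin K),
      (∑ i, ∑ j, conj (R l i j) * (∑ k, c k * R k i j)) = G.mulVec c l := by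
    intro c l
    calc ∑ i, ∑ j, conj (R l i j) * (∑ k, c k * R k i j)
        = ∑ i, ∑ j, ∑ k, c k * (conj (R l i j) * R k i j) := by
          refine Finset.sum_congr rfl fun i _ => Finset.sum_congr rfl fun j _ => ?_
          rw [Finset.mul_sum]
          exact Finset.sum_congr rfl fun k _ => by ring
      _ = ∑ k, ∑ i, ∑ j, c k * (conj (R l i j) * R k i j) := sum_rot _
      _ = ∑ k, c k * ∑ i, ∑ j, conj (R l i j) * R k i j := by
          simp only [Finset.mul_sum]
      _ = ∑ k, G l k * c k := by
          refine Finset.sum_congr rfl fun k _ => ?_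
          rw [hG]; ring
      _ = G.mulVec c l := (hmv G c l).symm
  -- G is hermitian
  have hGh : Gᴴ = G := by
    ext l k
    rw [Matrix.conjTranspose_apply, hG k l, hG l k]
    simp only [star_sum, star_mul', star_star, starRingEnd_apply]
    exact Finset.sum_congr rfl fun i _ => Finset.sum_congr rfl fun j _ => mul_comm _ _
  have hGGGdag : G * G * Gdag = G := by
    calc G * G * Gdag = G * (G * Gdag) := by rw [mul_assoc]
      _ = Gᴴ * (G * Gdag)ᴴ := by rw [hGh, h3]
      _ = (G * Gdag * G)ᴴ := by rw [← Matrix.conjTranspose_mul]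
      _ = Gᴴ := by rw [h1]
      _ = G := hGh
  have hP2 : G * Gdag * (G * Gdag) = G * Gdag := by
    rw [← mul_assoc, h1]
  set xv : Fin K → ℂ := σL - (G * Gdag).mulVec σL with hxv
  have hGx : G.mulVec xv = 0 := by
    rw [hxv, Matrix.mulVec_sub, Matrix.mulVec_mulVec, ← mul_assoc, hGGGdag, sub_self]
  have hPx : (G * Gdag).mulVec xv = 0 := by
    rw [hxv, Matrix.mulVec_sub, Matrix.mulVec_mulVec, hP2, sub_self]
  -- the matrix with coefficients xv vanishes
  have hipAx : ∑ i, ∑ j, conj (∑ k, xv k * R k i j) * (∑ k, xv k * R k i j) = 0 := by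
    calc ∑ i, ∑ j, conj (∑ k, xv k * R k i j) * (∑ k, xv k * R k i j)
        = ∑ i, ∑ j, ∑ l, conj (xv l) * (conj (R l i j) * (∑ k, xv k * R k i j)) := by
          refine Finset.sum_congr rfl fun i _ => Finset.sum_congr rfl fun j _ => ?_
          rw [map_sum, Finset.sum_mul]
          exact Finset.sum_congr rfl fun l _ => by rw [_root_.map_mul]; ring
      _ = ∑ l, ∑ i, ∑ j, conj (xv l) * (conj (R l i j) * (∑ k, xv k * R k i j)) := sum_rot _
      _ = ∑ l, conj (xv l) * G.mulVec xv l := by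
          refine Finset.sum_congr rfl fun l _ => ?_
          rw [← key xv l]
          simp only [Finset.mul_sum]
      _ = 0 := by rw [hGx]; simp
  have hAx : ∀ i j, (∑ k, xv k * R k i j) = 0 := by
    have h1' : ∑ i, ∑ j, Complex.normSq (∑ k, xv k * R k i j) = 0 := by
      have h2' : (∑ i, ∑ j, (Complex.normSq (∑ k, xv k * R k i j) : ℂ)) = 0 := by
        calc ∑ i, ∑ j, (Complex.normSq (∑ k, xv k * R k i j) : ℂ)
            = ∑ i, ∑ j, conj (∑ k, xv k * R k i j) * (∑ k, xv k * R k i j) := by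
              simp only [Complex.normSq_eq_conj_mul_self]
          _ = 0 := hipAx
      have := congrArg Complex.re h2'
      simpa [Complex.re_sum] using this
    intro i j
    have hnn : ∀ i ∈ Finset.univ, (0:ℝ) ≤ ∑ j, Complex.normSq (∑ k, xv k * R k i j) :=
      fun i _ => Finset.sum_nonneg fun j _ => Complex.normSq_nonneg _
    have h3' := (Finset.sum_eq_zero_iff_of_nonneg hnn).mp h1' i (Finset.mem_univ i)
    have h4' := (Finset.sum_eq_zero_iff_of_nonneg
      (fun j _ => Complex.normSq_nonneg _)).mp h3' j (Finset.mem_univ j)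
    exact Complex.normSq_eq_zero.mp h4'
  -- xv = 0
  have hA0 : ∑ k, conj (xv k) * σL k = 0 := by
    calc ∑ k, conj (xv k) * σL k
        = ∑ k, ∑ i, ∑ j, conj (xv k) * (conj (R k i j) * T i j) := by
          refine Finset.sum_congr rfl fun k _ => ?_
          rw [hσL' k]
          simp only [Finset.mul_sum]
      _ = ∑ i, ∑ j, ∑ k, conj (xv k) * (conj (R k i j) * T i j) :=
          (sum_rot fun i j k => conj (xv k) * (conj (R k i j) * T i j)).symm
      _ = ∑ i, ∑ j, conj (∑ k, xv k * R k i j) * T i j := by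
          refine Finset.sum_congr rfl fun i _ => Finset.sum_congr rfl fun j _ => ?_
          rw [map_sum, Finset.sum_mul]
          exact Finset.sum_congr rfl fun k _ => by rw [_root_.map_mul]; ring
      _ = 0 := by
          refine Finset.sum_eq_zero fun i _ => Finset.sum_eq_zero fun j _ => ?_
          rw [hAx i j]; simp
  have hB0 : ∑ k, conj (xv k) * ((G * Gdag).mulVec σL) k = 0 := by
    have hcol : ∀ l, ∑ k, conj (xv k) * (G * Gdag) k l = 0 := by
      intro l
      have heq : ∑ k, conj (xv k) * (G * Gdag) k l = conj (∑ k, (G * Gdag) l k * xv k) := by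
        rw [map_sum]
        refine Finset.sum_congr rfl fun k _ => ?_
        rw [_root_.map_mul]
        have h5 : conj ((G * Gdag) l k) = (G * Gdag) k l := by
          have h6 := congrFun (congrFun h3 k) l
          rw [Matrix.conjTranspose_apply] at h6
          rw [starRingEnd_apply]; exact h6
        rw [h5]
        ring
      rw [heq, ← hmv (G * Gdag) xv l, hPx]
      simp
    calc ∑ k, conj (xv k) * ((G * Gdag).mulVec σL) k
        = ∑ k, ∑ l, conj (xv k) * ((G * Gdag) k l * σL l) := by
          refine Finset.sum_congr rfl fun k _ => ?_
          rw [hmv (G * Gdag) σL k]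
          simp only [Finset.mul_sum]
      _ = ∑ l, ∑ k, conj (xv k) * ((G * Gdag) k l * σL l) := Finset.sum_comm
      _ = ∑ l, (∑ k, conj (xv k) * (G * Gdag) k l) * σL l := by
          refine Finset.sum_congr rfl fun l _ => ?_
          rw [Finset.sum_mul]
          exact Finset.sum_congr rfl fun k _ => by ring
      _ = 0 := by
          refine Finset.sum_eq_zero fun l _ => ?_
          rw [hcol l, zero_mul]
  have hxv0 : ∀ k, xv k = 0 := by
    have hc : ∑ k, conj (xv k) * xv k = 0 := by
      calc ∑ k, conj (xv k) * xv k
          = ∑ k, (conj (xv k) * σL k - conj (xv k) * ((G * Gdag).mulVec σL) k) := by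
            refine Finset.sum_congr rfl fun k _ => ?_
            rw [hxv]
            simp [mul_sub]
        _ = 0 := by rw [Finset.sum_sub_distrib, hA0, hB0, sub_zero]
    have hsum : ∑ k, Complex.normSq (xv k) = 0 := by
      have h2' : (∑ k, (Complex.normSq (xv k) : ℂ)) = 0 := by
        calc ∑ k, (Complex.normSq (xv k) : ℂ) = ∑ k, conj (xv k) * xv k := by
              simp only [Complex.normSq_eq_conj_mul_self]
          _ = 0 := hc
      have := congrArg Complex.re h2'
      simpa [Complex.re_sum] using this
    intro k
    exact Complex.normSq_eq_zero.mp ((Finset.sum_eq_zero_iff_of_nonneg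
      (fun _ _ => Complex.normSq_nonneg _)).mp hsum k (Finset.mem_univ k))
  -- orthogonality of the residual to each R k
  set D : Matrix (Fin m) (Fin n) ℂ := T - ∑ k, σ k • R k with hD
  have hOrth : ∀ k, ∑ i, ∑ j, conj (R k i j) * D i j = 0 := by
    intro k
    have hentry : ∀ i j, D i j = T i j - ∑ l, σ l * R l i j := by
      intro i j
      rw [hD]
      simp [Matrix.sub_apply, Matrix.sum_apply, Matrix.smul_apply, smul_eq_mul]
    calc ∑ i, ∑ j, conj (R k i j) * D i j
        = ∑ i, ∑ j, (conj (R k i j) * T i j - conj (R k i j) * (∑ l, σ l * R l i j)) := by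
          refine Finset.sum_congr rfl fun i _ => Finset.sum_congr rfl fun j _ => ?_
          rw [hentry, mul_sub]
      _ = σL k - G.mulVec σ k := by
          simp only [Finset.sum_sub_distrib]
          rw [← hσL' k, key σ k]
      _ = 0 := by
          have h7 := hxv0 k
          rw [hxv] at h7
          rw [hσ, Matrix.mulVec_mulVec]
          simpa [sub_eq_zero] using h7
  -- Pythagoras
  have hnorm : ∀ z : ℂ, ‖z‖ ^ 2 = Complex.normSq z := fun z => by
    rw [Complex.sq_norm]
  have hsplit : ∀ i j, (T - ∑ k, mcoef k • R k) i j = D i j + ∑ k, (σ k - mcoef k) * R k i j := by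
    intro i j
    rw [hD]
    simp only [Matrix.sub_apply, Matrix.sum_apply, Matrix.smul_apply, smul_eq_mul, sub_mul,
      Finset.sum_sub_distrib]
    ring
  have hcross : ∑ i, ∑ j, conj (D i j) * (∑ k, (σ k - mcoef k) * R k i j) = 0 := by
    calc ∑ i, ∑ j, conj (D i j) * (∑ k, (σ k - mcoef k) * R k i j)
        = ∑ i, ∑ j, ∑ k, (σ k - mcoef k) * (conj (D i j) * R k i j) := by
          refine Finset.sum_congr rfl fun i _ => Finset.sum_congr rfl fun j _ => ?_
          rw [Finset.mul_sum]
          exact Finset.sum_congr rfl fun k _ => by ring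
      _ = ∑ k, ∑ i, ∑ j, (σ k - mcoef k) * (conj (D i j) * R k i j) := sum_rot _
      _ = ∑ k, (σ k - mcoef k) * conj (∑ i, ∑ j, conj (R k i j) * D i j) := by
          refine Finset.sum_congr rfl fun k _ => ?_
          have hconj : conj (∑ i, ∑ j, conj (R k i j) * D i j)
              = ∑ i, ∑ j, conj (D i j) * R k i j := by
            rw [map_sum]
            refine Finset.sum_congr rfl fun i _ => ?_
            rw [map_sum]
            refine Finset.sum_congr rfl fun j _ => ?_
            rw [_root_.map_mul, Complex.conj_conj]
            ring
          rw [hconj]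
          simp only [Finset.mul_sum]
      _ = 0 := by
          refine Finset.sum_eq_zero fun k _ => ?_
          rw [hOrth k]
          simp
  have hcrossre : ∑ i, ∑ j, (D i j * conj (∑ k, (σ k - mcoef k) * R k i j)).re = 0 := by
    have h6 : ∑ i, ∑ j, D i j * conj (∑ k, (σ k - mcoef k) * R k i j) = 0 := by
      have heq : ∑ i, ∑ j, D i j * conj (∑ k, (σ k - mcoef k) * R k i j)
          = conj (∑ i, ∑ j, conj (D i j) * (∑ k, (σ k - mcoef k) * R k i j)) := by
        rw [map_sum]
        refine Finset.sum_congr rfl fun i _ => ?_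
        rw [map_sum]
        refine Finset.sum_congr rfl fun j _ => ?_
        rw [_root_.map_mul, Complex.conj_conj]
      rw [heq, hcross]
      simp
    calc ∑ i, ∑ j, (D i j * conj (∑ k, (σ k - mcoef k) * R k i j)).re
        = (∑ i, ∑ j, D i j * conj (∑ k, (σ k - mcoef k) * R k i j)).re := by
          rw [Complex.re_sum]
          exact Finset.sum_congr rfl fun i _ => (Complex.re_sum _ _).symm
      _ = 0 := by rw [h6]; simp
  have hfinal : ∑ i, ∑ j, ‖(T - ∑ k, mcoef k • R k) i j‖ ^ 2
      = ∑ i, ∑ j, ‖D i j‖ ^ 2 + ∑ i, ∑ j, ‖(∑ k, (σ k - mcoef k) * R k i j)‖ ^ 2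
        + 2 * ∑ i, ∑ j, (D i j * conj (∑ k, (σ k - mcoef k) * R k i j)).re := by
    have hterm : ∀ i j, ‖(T - ∑ k, mcoef k • R k) i j‖ ^ 2
        = ‖D i j‖ ^ 2 + ‖(∑ k, (σ k - mcoef k) * R k i j)‖ ^ 2
          + 2 * (D i j * conj (∑ k, (σ k - mcoef k) * R k i j)).re := by
      intro i j
      rw [hsplit i j, hnorm, hnorm, hnorm, Complex.normSq_add]
    calc ∑ i, ∑ j, ‖(T - ∑ k, mcoef k • R k) i j‖ ^ 2
        = ∑ i, ∑ j, (‖D i j‖ ^ 2 + ‖(∑ k, (σ k - mcoef k) * R k i j)‖ ^ 2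
            + 2 * (D i j * conj (∑ k, (σ k - mcoef k) * R k i j)).re) := by
          exact Finset.sum_congr rfl fun i _ => Finset.sum_congr rfl fun j _ => hterm i j
      _ = _ := by
          simp only [Finset.sum_add_distrib, Finset.mul_sum]
  rw [hfinal, hcrossre]
  have hEnn : 0 ≤ ∑ i, ∑ j, ‖(∑ k, (σ k - mcoef k) * R k i j)‖ ^ 2 :=
    Finset.sum_nonneg fun i _ => Finset.sum_nonneg fun j _ => by positivity
  linarith
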